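/- arXiv:2105.14423 — 4 statements merged into one kernel-verified Lean document; each statement's English description precedes it below -/
import Mathlib

section
/- Fix 0 ≤ i ≤ n and a threshold τ. Let A and A' be finsets of items contained in [i] with card A = card A' and ⋃_{j∈A} S j = ⋃_{j∈A'} S j. Then for every finset B of items disjoint from [i] (i.e., B ⊆ {i,…,n−1}), the package A ∪ B is qualified if and only if the package A' ∪ B is qualified, where a package P is qualified iff card P = K and fair(P) ≥ τ. -/
/-- The finset of the first `i` items among `Fin n`, i.e. `{0, …, i−1}`. -/
def firstItems (n i : ℕ) : Finset (Fin n) :=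
  Finset.univ.filter (fun j => (j : ℕ) < i)

theorem stmt_4 (n K τ : ℕ) (G : Type) [Fintype G] [DecidableEq G]
    (S : Fin n → Finset G) (i : ℕ) (hi : i ≤ n)
    (A A' : Finset (Fin n))
    (hA : A ⊆ firstItems n i) (hA' : A' ⊆ firstItems n i)
    (hcard : A.card = A'.card)
    (hunion : A.biUnion S = A'.biUnion S) :
    ∀ B : Finset (Fin n), Disjoint B (firstItems n i) →
      (((A ∪ B).card = K ∧ τ ≤ ((A ∪ B).biUnion S).card) ↔
        ((A' ∪ B).card = K ∧ τ ≤ ((A' ∪ B).biUnion S).card)) := by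
  intro B hB
  have d1 : Disjoint A B := (hB.mono_right hA).symm
  have d2 : Disjoint A' B := (hB.mono_right hA').symm
  have h3 : (A ∪ B).biUnion S = (A' ∪ B).biUnion S := by
    ext x
    simp only [Finset.mem_biUnion, Finset.mem_union]
    have := Finset.ext_iff.mp hunion x
    simp only [Finset.mem_biUnion] at this
    constructor
    · rintro ⟨a, ha | hb, hx⟩
      · obtain ⟨a', ha', hx'⟩ := this.mp ⟨a, ha, hx⟩
        exact ⟨a', Or.inl ha', hx'⟩
      · exact ⟨a, Or.inr hb, hx⟩
    · rintro ⟨a, ha | hb, hx⟩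
      · obtain ⟨a', ha', hx'⟩ := this.mpr ⟨a, ha, hx⟩
        exact ⟨a', Or.inl ha', hx'⟩
      · exact ⟨a, Or.inr hb, hx⟩
  rw [Finset.card_union_of_disjoint d1, Finset.card_union_of_disjoint d2, hcard, h3]
end

section
/- Fix 0 ≤ i ≤ n and a threshold τ, and let g = Fintype.card G. Define an equivalence relation on finsets A ⊆ [i] by: A ≈ A' iff for every finset B of items disjoint from [i], the package A ∪ B is qualified exactly when A' ∪ B is qualified (a package P is qualified iff card P = K and fair(P) ≥ τ). Then the number of equivalence classes of ≈ on the powerset of [i] is at most (K+1)·2^g + 1. -/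
/-- The equivalence relation on subsets of `[i]`: `A ≈ A'` iff for every
finset `B` of items disjoint from `[i]`, the package `A ∪ B` is qualified
(i.e. has `K` items and fairness at least `τ`) exactly when `A' ∪ B` is. -/
def pkgSetoid (n K τ i : ℕ) {G : Type} [DecidableEq G] (S : Fin n → Finset G) :
    Setoid {A : Finset (Fin n) // A ⊆ firstItems n i} where
  r A A' := ∀ B : Finset (Fin n), Disjoint B (firstItems n i) →
    (((A.1 ∪ B).card = K ∧ τ ≤ ((A.1 ∪ B).biUnion S).card) ↔
      ((A'.1 ∪ B).card = K ∧ τ ≤ ((A'.1 ∪ B).biUnion S).card))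
  iseqv :=
    ⟨fun _ _ _ => Iff.rfl,
     fun h B hB => (h B hB).symm,
     fun h h' B hB => (h B hB).trans (h' B hB)⟩

theorem stmt_5 (n K τ i : ℕ) (G : Type) [Fintype G] [DecidableEq G]
    (S : Fin n → Finset G) (hi : i ≤ n) :
    Nat.card (Quotient (pkgSetoid n K τ i S)) ≤ (K + 1) * 2 ^ (Fintype.card G) + 1 := by
  classical
  have hbuu : ∀ (s t : Finset (Fin n)), (s ∪ t).biUnion S = s.biUnion S ∪ t.biUnion S := by
    intro s t; ext x; simp [or_and_right, exists_or]
  set F : {A : Finset (Fin n) // A ⊆ firstItems n i} → Option (Fin (K + 1) × Finset G) :=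
    fun A => if h : A.1.card ≤ K then
      some (⟨A.1.card, Nat.lt_succ_of_le h⟩, A.1.biUnion S) else none with hF
  have key : ∀ A A', F A = F A' → (pkgSetoid n K τ i S).r A A' := by
    intro A A' hFF B hB
    have hdA : Disjoint A.1 B := ((hB.mono_right A.2)).symm
    have hdA' : Disjoint A'.1 B := ((hB.mono_right A'.2)).symm
    have hcA := Finset.card_le_card (Finset.subset_union_left : A.1 ⊆ A.1 ∪ B)
    have hcA' := Finset.card_le_card (Finset.subset_union_left : A'.1 ⊆ A'.1 ∪ B)
    by_cases h1 : A.1.card ≤ K <;> by_cases h2 : A'.1.card ≤ K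
    · simp only [hF, dif_pos h1, dif_pos h2, Option.some.injEq, Prod.mk.injEq,
        Fin.mk.injEq] at hFF
      obtain ⟨hcard, hbu⟩ := hFF
      rw [Finset.card_union_of_disjoint hdA, Finset.card_union_of_disjoint hdA',
        hbuu, hbuu, hcard, hbu]
    · simp [hF, dif_pos h1, dif_neg h2] at hFF
    · simp [hF, dif_neg h1, dif_pos h2] at hFF
    · constructor <;> rintro ⟨hc, -⟩ <;> exfalso <;> omega
  have hinj : Function.Injective
      (fun q : Quotient (pkgSetoid n K τ i S) => F q.out) := by
    intro q q' h
    calc q = ⟦q.out⟧ := (Quotient.out_eq q).symm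
      _ = ⟦q'.out⟧ := Quotient.sound (key _ _ h)
      _ = q' := q'.out_eq
  have hle := Nat.card_le_card_of_injective _ hinj
  simpa using hle
end

section
/- Fix m ≥ 1. For every 1 ≤ i ≤ n, every 1 ≤ k, and every capped count vector H : G → ℕ with H u ≤ m for all u, the following recurrence holds: Q_m(i,k,H) if and only if Q_m(i−1,k,H) or there exists a capped count vector F : G → ℕ with F u ≤ m for all u such that Q_m(i−1,k−1,F) and, for every member u, H u = min(m, F u + (1 if u ∈ S i else 0)). -/
/-- `Qm n S m i k H` : there exists a package `P ⊆ [i]` with `card P = k` such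
that for every member `u`, `H u` is the number of items of `P` satisfying `u`,
capped at `m`. -/
def Qm (n : ℕ) {G : Type} [DecidableEq G] (S : Fin n → Finset G)
    (m i k : ℕ) (H : G → ℕ) : Prop :=
  ∃ P : Finset (Fin n), P ⊆ firstItems n i ∧ P.card = k ∧
    ∀ u : G, H u = min m ((P.filter (fun j => u ∈ S j)).card)

theorem stmt_7 (n m : ℕ) (G : Type) [Fintype G] [DecidableEq G]
    (S : Fin n → Finset G) (hm : 1 ≤ m)
    (i k : ℕ) (h1 : 1 ≤ i) (h2 : i ≤ n) (hk : 1 ≤ k)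
    (H : G → ℕ) (hH : ∀ u, H u ≤ m) :
    Qm n S m i k H ↔
      Qm n S m (i - 1) k H ∨
        ∃ F : G → ℕ, (∀ u, F u ≤ m) ∧ Qm n S m (i - 1) (k - 1) F ∧
          ∀ u : G, H u = min m (F u + if u ∈ S ⟨i - 1, by omega⟩ then 1 else 0) := by
  set x : Fin n := ⟨i - 1, by omega⟩ with hx
  constructor
  · rintro ⟨P, hPsub, hPcard, hPcount⟩
    by_cases hxP : x ∈ P
    · right
      refine ⟨fun u => min m (((P.erase x).filter (fun j => u ∈ S j)).card),
        fun u => min_le_left _ _, ⟨P.erase x, ?_, ?_, fun u => rfl⟩, ?_⟩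
      · intro j hj
        have h1j := hPsub (Finset.mem_of_mem_erase hj)
        have hjx : j ≠ x := Finset.ne_of_mem_erase hj
        have h2j : (j : ℕ) ≠ i - 1 := fun h => hjx (Fin.ext h)
        simp only [firstItems, Finset.mem_filter, Finset.mem_univ, true_and] at h1j ⊢
        omega
      · rw [Finset.card_erase_of_mem hxP, hPcard]
      · intro u
        have hP : P = insert x (P.erase x) := (Finset.insert_erase hxP).symm
        rw [hPcount u]
        have hcnt : (P.filter (fun j => u ∈ S j)).card
            = ((P.erase x).filter (fun j => u ∈ S j)).card + (if u ∈ S x then 1 else 0) := by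
          conv_lhs => rw [hP]
          rw [Finset.filter_insert]
          split_ifs with hu
          · rw [Finset.card_insert_of_notMem (fun h => Finset.notMem_erase x P
              (Finset.mem_filter.mp h).1)]
          · rfl
        rw [hcnt]
        dsimp only
        omega
    · left
      refine ⟨P, ?_, hPcard, hPcount⟩
      intro j hj
      have h1j := hPsub hj
      have hjx : j ≠ x := fun h => hxP (h ▸ hj)
      have h2j : (j : ℕ) ≠ i - 1 := fun h => hjx (Fin.ext h)
      simp only [firstItems, Finset.mem_filter, Finset.mem_univ, true_and] at h1j ⊢
      omega
  · rintro (⟨P, hPsub, hPcard, hPc⟩ | ⟨F, hF, ⟨P, hPsub, hPcard, hPc⟩, hHF⟩)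
    · refine ⟨P, ?_, hPcard, hPc⟩
      intro j hj
      have := hPsub hj
      simp only [firstItems, Finset.mem_filter, Finset.mem_univ, true_and] at this ⊢
      omega
    · have hxP : x ∉ P := fun h => by
        have := hPsub h
        simp only [firstItems, Finset.mem_filter, Finset.mem_univ, true_and, hx] at this
        omega
      refine ⟨insert x P, ?_, ?_, ?_⟩
      · intro j hj
        rcases Finset.mem_insert.mp hj with h | h
        · subst h
          simp only [firstItems, Finset.mem_filter, Finset.mem_univ, true_and, hx]
          omega
        · have := hPsub h
          simp only [firstItems, Finset.mem_filter, Finset.mem_univ, true_and] at this ⊢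
          omega
      · rw [Finset.card_insert_of_notMem hxP, hPcard]; omega
      · intro u
        rw [Finset.filter_insert]
        have := hHF u
        have := hPc u
        split
        · rw [Finset.card_insert_of_notMem (fun h => hxP (Finset.mem_filter.mp h).1)]
          simp_all
          omega
        · simp_all
end

section
/- Let w : Fin n → ℝ be item weights and, for 0 ≤ i ≤ n, natural k, and finset H of group members, let M(i,k,H) : WithBot ℝ be the maximum of Σ_{j∈P} w j over all finsets P ⊆ [i] with card P = k and ⋃_{j∈P} S j = H (with M = ⊥ when no such P exists). Then for every 1 ≤ i ≤ n and 1 ≤ k, M(i,k,H) = max( M(i−1,k,H), max_{F : F ∪ S i = H} (M(i−1,k−1,F) + w i) ), where the inner maximum ranges over all finsets F of group members with F ∪ S i = H, an empty maximum is ⊥, and ⊥ + w i = ⊥. -/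
/-- `Mval n S w i k H` : the maximum of `∑_{j ∈ P} w j` over all packages
`P ⊆ [i]` with `card P = k` and `⋃_{j ∈ P} S j = H`, as an element of
`WithBot ℝ` (it is `⊥` when no such package exists). -/
noncomputable def Mval (n : ℕ) {G : Type} [DecidableEq G] (S : Fin n → Finset G)
    (w : Fin n → ℝ) (i k : ℕ) (H : Finset G) : WithBot ℝ :=
  (((firstItems n i).powerset.filter
      (fun P => P.card = k ∧ P.biUnion S = H)).image
    (fun P => ∑ j ∈ P, w j)).max

theorem stmt_10 (n : ℕ) (G : Type) [Fintype G] [DecidableEq G]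
    (S : Fin n → Finset G) (w : Fin n → ℝ)
    (i k : ℕ) (h1 : 1 ≤ i) (h2 : i ≤ n) (hk : 1 ≤ k) (H : Finset G) :
    Mval n S w i k H =
      max (Mval n S w (i - 1) k H)
        (((Finset.univ : Finset (Finset G)).filter
            (fun F => F ∪ S ⟨i - 1, by omega⟩ = H)).sup
          (fun F => Mval n S w (i - 1) (k - 1) F + (w ⟨i - 1, by omega⟩ : WithBot ℝ))) := by
  set t : Fin n := ⟨i - 1, by omega⟩ with ht
  apply le_antisymm
  · apply Finset.max_le
    intro a ha
    rw [Finset.mem_image] at ha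
    obtain ⟨P, hP, rfl⟩ := ha
    rw [Finset.mem_filter, Finset.mem_powerset] at hP
    obtain ⟨hPsub, hPcard, hPU⟩ := hP
    by_cases htP : t ∈ P
    · refine le_trans ?_ (le_max_right _ _)
      have hF : (P.erase t).biUnion S ∪ S t = H := by
        rw [Finset.union_comm, ← Finset.biUnion_insert, Finset.insert_erase htP, hPU]
      refine le_trans ?_ (Finset.le_sup
        (f := fun F => Mval n S w (i-1) (k-1) F + (w t : WithBot ℝ))
        (b := (P.erase t).biUnion S) (by simp [hF]))
      have hsum : ∑ j ∈ P, w j = (∑ j ∈ P.erase t, w j) + w t := by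
        rw [Finset.sum_erase_add P w htP]
      rw [hsum, WithBot.coe_add]
      apply add_le_add_left
      apply Finset.le_max
      rw [Finset.mem_image]
      refine ⟨P.erase t, ?_, rfl⟩
      rw [Finset.mem_filter, Finset.mem_powerset]
      refine ⟨?_, ?_, rfl⟩
      · intro j hj
        have hne : j ≠ t := Finset.ne_of_mem_erase hj
        have hlt : (j : ℕ) < i := by
          simpa [firstItems] using hPsub (Finset.mem_of_mem_erase hj)
        have hne' : (j : ℕ) ≠ i - 1 := fun h => hne (Fin.ext h)
        simp only [firstItems, Finset.mem_filter, Finset.mem_univ, true_and]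
        omega
      · rw [Finset.card_erase_of_mem htP, hPcard]
    · refine le_trans ?_ (le_max_left _ _)
      apply Finset.le_max
      rw [Finset.mem_image]
      refine ⟨P, ?_, rfl⟩
      rw [Finset.mem_filter, Finset.mem_powerset]
      refine ⟨?_, hPcard, hPU⟩
      intro j hj
      have hlt : (j : ℕ) < i := by simpa [firstItems] using hPsub hj
      have hne : j ≠ t := fun h => htP (h ▸ hj)
      have hne' : (j : ℕ) ≠ i - 1 := fun h => hne (Fin.ext h)
      simp only [firstItems, Finset.mem_filter, Finset.mem_univ, true_and]
      omega
  · apply max_le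
    · apply Finset.max_mono
      apply Finset.image_subset_image
      apply Finset.filter_subset_filter
      apply Finset.powerset_mono.mpr
      intro j hj
      simp only [firstItems, Finset.mem_filter, Finset.mem_univ, true_and] at hj ⊢
      omega
    · apply Finset.sup_le
      intro F hF
      rw [Finset.mem_filter] at hF
      obtain ⟨-, hFU⟩ := hF
      cases hM : Mval n S w (i-1) (k-1) F with
      | bot => simp
      | coe v =>
        have hv := Finset.mem_of_max hM
        rw [Finset.mem_image] at hv
        obtain ⟨P', hP', hsum⟩ := hv
        rw [Finset.mem_filter, Finset.mem_powerset] at hP'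
        obtain ⟨hP'sub, hP'card, hP'U⟩ := hP'
        have htP' : t ∉ P' := by
          intro h
          have := hP'sub h
          simp [firstItems, ht] at this
        rw [← hsum, ← WithBot.coe_add]
        apply Finset.le_max
        rw [Finset.mem_image]
        refine ⟨insert t P', ?_, ?_⟩
        · rw [Finset.mem_filter, Finset.mem_powerset]
          refine ⟨?_, ?_, ?_⟩
          · intro j hj
            rw [Finset.mem_insert] at hj
            simp only [firstItems, Finset.mem_filter, Finset.mem_univ, true_and]
            rcases hj with rfl | hj
            · show (t : ℕ) < i
              rw [ht]; simp; omega
            · have := hP'sub hj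
              simp only [firstItems, Finset.mem_filter, Finset.mem_univ, true_and] at this
              omega
          · rw [Finset.card_insert_of_notMem htP', hP'card]; omega
          · rw [Finset.biUnion_insert, hP'U, Finset.union_comm, hFU]
        · rw [Finset.sum_insert htP', add_comm]
end
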